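/- Palais–Smale boundedness: Let H be a Hilbert space, N : H × H → ℝ a C¹ functional satisfying the monotonicity conditions (h2) with matrix M convergent to zero (as in the main theorem, with all relevant coefficients m₁₁ < ½). Let (e_k) = ((e₁)_k, (e₂)_k) be a sequence with (e₁)_k − N_u(e_k) → 0 and −(e₂)_k − N_v(e_k) → 0 in H. Then the sequence (e_k) is bounded in H × H. -/
import Mathlib


open Filter RealInnerProductSpace

/-- boundedness of Palais–Smale-type sequences under the
monotonicity conditions with coefficient m₁₁ (matrix of all entries m₁₁
convergent to zero, i.e. 2 m₁₁ < 1). -/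
theorem stmt_12 {H : Type*} [NormedAddCommGroup H] [InnerProductSpace ℝ H] [CompleteSpace H]
    (N : H → H → ℝ) (Nu Nv : H → H → H)
    (hNu : ∀ u v : H, HasGradientAt (fun x => N x v) (Nu u v) u)
    (hNv : ∀ u v : H, HasGradientAt (fun y => N u y) (Nv u v) v)
    (m : ℝ) (hm : 0 ≤ m) (hconv : 2 * m < 1)
    (h2u : ∀ u v u' v' : H,
      ⟪Nu u v - Nu u' v', u - u'⟫ ≤ m * ‖u - u'‖^2 + m * ‖u - u'‖ * ‖v - v'‖)
    (h2v : ∀ u v u' v' : H,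
      -m * ‖v - v'‖^2 - m * ‖u - u'‖ * ‖v - v'‖ ≤ ⟪Nv u v - Nv u' v', v - v'⟫)
    (e₁ e₂ : ℕ → H)
    (h₁ : Tendsto (fun k => e₁ k - Nu (e₁ k) (e₂ k)) atTop (nhds 0))
    (h₂ : Tendsto (fun k => -(e₂ k) - Nv (e₁ k) (e₂ k)) atTop (nhds 0)) :
    ∃ B : ℝ, ∀ k, ‖e₁ k‖ ≤ B ∧ ‖e₂ k‖ ≤ B := by
  -- norms of the Palais–Smale error terms are bounded
  obtain ⟨F₁, hF₁⟩ := (h₁.norm.bddAbove_range)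
  obtain ⟨F₂, hF₂⟩ := (h₂.norm.bddAbove_range)
  have hF₁' : ∀ k, ‖e₁ k - Nu (e₁ k) (e₂ k)‖ ≤ F₁ := fun k => hF₁ ⟨k, rfl⟩
  have hF₂' : ∀ k, ‖-(e₂ k) - Nv (e₁ k) (e₂ k)‖ ≤ F₂ := fun k => hF₂ ⟨k, rfl⟩
  set c₁ : ℝ := ‖Nu 0 0‖ with hc₁
  set c₂ : ℝ := ‖Nv 0 0‖ with hc₂
  set K : ℝ := |F₁| + |F₂| + c₁ + c₂ + 1 with hK
  have hKpos : 1 ≤ K := by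
    have h1 := abs_nonneg F₁
    have h2 := abs_nonneg F₂
    have h3 : (0:ℝ) ≤ c₁ := norm_nonneg _
    have h4 : (0:ℝ) ≤ c₂ := norm_nonneg _
    simp only [hK]; linarith
  have hm2 : 0 < 1 - 2 * m := by linarith
  refine ⟨2 * K / (1 - 2 * m), fun k => ?_⟩
  set u := e₁ k with hu
  set v := e₂ k with hv
  set a := ‖u‖ with ha
  set b := ‖v‖ with hb
  have hann : 0 ≤ a := norm_nonneg _
  have hbnn : 0 ≤ b := norm_nonneg _
  -- inequality from h2u
  have keyu : ⟪Nu u v, u⟫ ≤ m * a ^ 2 + m * a * b + c₁ * a := by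
    have h := h2u u v 0 0
    simp only [sub_zero] at h
    have h' : ⟪Nu u v, u⟫ - ⟪Nu 0 0, u⟫ ≤ m * a ^ 2 + m * a * b := by
      rw [← inner_sub_left]; exact h
    have h'' : ⟪Nu 0 0, u⟫ ≤ c₁ * a := real_inner_le_norm _ _
    linarith
  have keyv : -⟪Nv u v, v⟫ ≤ m * b ^ 2 + m * a * b + c₂ * b := by
    have h := h2v u v 0 0
    simp only [sub_zero] at h
    have h' : -m * b ^ 2 - m * a * b ≤ ⟪Nv u v, v⟫ - ⟪Nv 0 0, v⟫ := by
      rw [← inner_sub_left]; exact h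
    have h'' : -⟪Nv 0 0, v⟫ ≤ c₂ * b := by
      have := real_inner_le_norm (-(Nv 0 0)) v
      simpa [norm_neg] using this
    linarith
  -- a² ≤ F₁ a + m a² + m a b + c₁ a
  have hua : a ^ 2 ≤ F₁ * a + m * a ^ 2 + m * a * b + c₁ * a := by
    have hdecomp : (⟪u, u⟫ : ℝ) = ⟪u - Nu u v, u⟫ + ⟪Nu u v, u⟫ := by
      rw [← inner_add_left]; congr 1; abel
    have h1 : (⟪u - Nu u v, u⟫ : ℝ) ≤ F₁ * a :=
      le_trans (real_inner_le_norm _ _) (by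
        have := hF₁' k
        have : ‖u - Nu u v‖ ≤ F₁ := this
        nlinarith [norm_nonneg u])
    have h2 : (⟪u, u⟫ : ℝ) = a ^ 2 := real_inner_self_eq_norm_sq u
    linarith [keyu]
  have hub : b ^ 2 ≤ F₂ * b + m * b ^ 2 + m * a * b + c₂ * b := by
    have hdecomp : (⟪v, v⟫ : ℝ) = -⟪-v - Nv u v, v⟫ - ⟪Nv u v, v⟫ := by
      rw [← inner_neg_left, ← inner_sub_left]; congr 1; abel
    have h1 : -(⟪-v - Nv u v, v⟫ : ℝ) ≤ F₂ * b := by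
      have hle := real_inner_le_norm (-(-v - Nv u v)) v
      rw [inner_neg_left, norm_neg] at hle
      have := hF₂' k
      nlinarith [norm_nonneg v]
    have h2 : (⟪v, v⟫ : ℝ) = b ^ 2 := real_inner_self_eq_norm_sq v
    linarith [keyv]
  -- combine
  have hF₁K : F₁ + c₁ ≤ K := by
    have : F₁ ≤ |F₁| := le_abs_self _
    have h2 : (0:ℝ) ≤ |F₂| := abs_nonneg _
    have h3 : (0:ℝ) ≤ c₂ := norm_nonneg _
    simp only [hK]; linarith
  have hF₂K : F₂ + c₂ ≤ K := by
    have : F₂ ≤ |F₂| := le_abs_self _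
    have h2 : (0:ℝ) ≤ |F₁| := abs_nonneg _
    have h3 : (0:ℝ) ≤ c₁ := norm_nonneg _
    simp only [hK]; linarith
  have hsum : (1 - 2 * m) * (a ^ 2 + b ^ 2) ≤ K * (a + b) := by
    nlinarith [sq_nonneg (a - b), mul_nonneg hann hbnn]
  have hfin : (1 - 2 * m) * a ≤ 2 * K ∧ (1 - 2 * m) * b ≤ 2 * K := by
    constructor <;>
      nlinarith [sq_nonneg (a - b), sq_nonneg (a + b), mul_nonneg hann hbnn,
        mul_pos hm2 (lt_of_lt_of_le zero_lt_one hKpos)]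
  constructor
  · rw [le_div_iff₀ hm2]; linarith [hfin.1]
  · rw [le_div_iff₀ hm2]; linarith [hfin.2]
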